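/- Fix P ≥ 1, widths m^0,…,m^{P−1} ∈ ℕ, constants C1 > 0 and C3^0,…,C3^P > 0, L > 0, and an L-Lipschitz function h : ℝ → ℝ. Define hypothesis classes recursively: F^0 = {x ↦ ⟨w, x⟩ : w ∈ ℝ^d, ‖w‖₂ ≤ C3^0}, and for p = 1,…,P, F^p = {x ↦ Σ_{j=1}^{m^{p−1}} w_j h(f_j(x)) : f_1,…,f_{m^{p−1}} ∈ F^{p−1}, w ∈ ℝ^{m^{p−1}}, ‖w‖₂ ≤ C3^p}. Then for any points x_1,…,x_n ∈ ℝ^d with ‖x_i‖₂ ≤ C1 for all i, the empirical Rademacher complexity satisfies R̂_n(F^P) ≤ (2L)^P C1 C3^0 (Π_{p=1}^{P} √(m^{p−1}) C3^p) / √n + (|h(0)|/√n) Σ_{q=1}^{P} (2L)^{P−q} Π_{p=q}^{P} √(m^{p−1}) C3^p. -/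

import Mathlib

open RealInnerProductSpace

/-- (One-sided) empirical Rademacher complexity
`R̂_n(F) = 2^{-n} Σ_{σ ∈ {−1,1}^n} sup_{f ∈ F} (1/n) Σ_i σ_i f (x i)`. -/
noncomputable def radEmp {α : Type*} {n : ℕ} (F : Set (α → ℝ)) (x : Fin n → α) : ℝ :=
  (2 ^ n : ℝ)⁻¹ * ∑ σ : Fin n → Bool,
    sSup {r : ℝ | ∃ f ∈ F, r = (n : ℝ)⁻¹ * ∑ i, (if σ i then (1 : ℝ) else -1) * f (x i)}

/-- The recursively defined multi-layer hypothesis classes: `F^0` is the class of linear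
functionals with weight norm at most `C3 0`, and `F^{p+1}` consists of functions
`x ↦ Σ_{j=1}^{m^p} w_j h(f_j(x))` with `f_j ∈ F^p` and `‖w‖₂ ≤ C3 (p+1)`.
Here `msz p` is the width `m^p` of hidden layer `p`. -/
def Fclass (d : ℕ) (msz : ℕ → ℕ) (C3 : ℕ → ℝ) (h : ℝ → ℝ) :
    ℕ → Set (EuclideanSpace ℝ (Fin d) → ℝ)
  | 0 => {f | ∃ w : EuclideanSpace ℝ (Fin d), ‖w‖ ≤ C3 0 ∧ f = fun x => ⟪w, x⟫}
  | p + 1 => {f | ∃ (g : Fin (msz p) → EuclideanSpace ℝ (Fin d) → ℝ)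
      (w : EuclideanSpace ℝ (Fin (msz p))),
      (∀ j, g j ∈ Fclass d msz C3 h p) ∧ ‖w‖ ≤ C3 (p + 1) ∧
      f = fun x => ∑ j, w j * h (g j x)}

def eps (b : Bool) : ℝ := if b then 1 else -1

lemma eps_abs (b : Bool) : |eps b| = 1 := by cases b <;> simp [eps]
lemma eps_not (b : Bool) : eps (!b) = - eps b := by cases b <;> simp [eps]
lemma eps_mul_self (b : Bool) : eps b * eps b = 1 := by cases b <;> norm_num [eps]

lemma setOf_eq_image {G : Type*} (F : Set G) (e : G → ℝ) :
    {r : ℝ | ∃ f ∈ F, r = e f} = e '' F := by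
  ext r
  constructor
  · rintro ⟨f, hf, rfl⟩; exact ⟨f, hf, rfl⟩
  · rintro ⟨f, hf, rfl⟩; exact ⟨f, hf, rfl⟩

lemma bdd_of_forall {G : Type*} {F : Set G} {e : G → ℝ} {B : ℝ} (h : ∀ g ∈ F, e g ≤ B) :
    BddAbove (e '' F) := ⟨B, by rintro r ⟨g, hg, rfl⟩; exact h g hg⟩

lemma sSup_image_mul {G : Type*} {F : Set G} (hne : F.Nonempty) (e : G → ℝ) {B : ℝ}
    (hB : ∀ g ∈ F, |e g| ≤ B) {c : ℝ} (hc : 0 ≤ c) :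
    sSup ((fun g => c * e g) '' F) = c * sSup (e '' F) := by
  have hbdd : BddAbove (e '' F) := bdd_of_forall (fun g hg => (abs_le.mp (hB g hg)).2)
  rcases eq_or_lt_of_le hc with rfl | hc
  · have him : (fun g => (0:ℝ) * e g) '' F = {0} := by
      rw [show (fun g => (0:ℝ) * e g) = fun _ => (0:ℝ) by funext g; ring]
      exact Set.Nonempty.image_const hne 0
    rw [him, csSup_singleton, zero_mul]
  · apply le_antisymm
    · apply csSup_le (hne.image _)
      rintro r ⟨g, hg, rfl⟩
      exact mul_le_mul_of_nonneg_left (le_csSup hbdd ⟨g, hg, rfl⟩) hc.le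
    · rw [← le_div_iff₀' hc]
      apply csSup_le (hne.image _)
      rintro r ⟨g, hg, rfl⟩
      rw [le_div_iff₀' hc]
      exact le_csSup (bdd_of_forall (B := c * B) (fun g' hg' => mul_le_mul_of_nonneg_left ((abs_le.mp (hB g' hg')).2) hc.le)) ⟨g, hg, rfl⟩
lemma twopoint {G : Type*} {F : Set G} (hne : F.Nonempty) (a b c : G → ℝ)
    (hab : ∀ g ∈ F, ∀ g' ∈ F, |a g - a g'| ≤ |b g - b g'|)
    (h1 : BddAbove ((fun g => b g + c g) '' F)) (h2 : BddAbove ((fun g => -b g + c g) '' F)) :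
    sSup ((fun g => a g + c g) '' F) + sSup ((fun g => -a g + c g) '' F) ≤
      sSup ((fun g => b g + c g) '' F) + sSup ((fun g => -b g + c g) '' F) := by
  set M := sSup ((fun g => b g + c g) '' F) + sSup ((fun g => -b g + c g) '' F) with hM
  have key : ∀ g ∈ F, ∀ g' ∈ F, (a g + c g) + (-a g' + c g') ≤ M := by
    intro g hg g' hg'
    have h3 := le_csSup h1 (Set.mem_image_of_mem _ hg)
    have h4 := le_csSup h2 (Set.mem_image_of_mem _ hg')
    have h5 := le_csSup h1 (Set.mem_image_of_mem _ hg')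
    have h6 := le_csSup h2 (Set.mem_image_of_mem _ hg)
    have h7 := hab g hg g' hg'
    rcases abs_cases (b g - b g') with ⟨he, _⟩ | ⟨he, _⟩ <;>
      rcases abs_cases (a g - a g') with ⟨ha, _⟩ | ⟨ha, _⟩ <;> rw [he] at h7 <;> linarith
  have main : sSup ((fun g => a g + c g) '' F) ≤ M - sSup ((fun g => -a g + c g) '' F) := by
    apply csSup_le (hne.image _)
    rintro r ⟨g, hg, rfl⟩
    rw [le_sub_iff_add_le, add_comm, ← le_sub_iff_add_le]
    apply csSup_le (hne.image _)
    rintro r ⟨g', hg', rfl⟩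
    rw [le_sub_iff_add_le]
    dsimp only
    linarith [key g hg g' hg']
  linarith

def flipAt {n : ℕ} (j : Fin n) : (Fin n → Bool) ≃ (Fin n → Bool) :=
  Function.Involutive.toPerm (fun σ => Function.update σ j (!σ j)) (by
    intro σ; funext i
    by_cases hij : i = j
    · subst hij; simp
    · simp [Function.update_of_ne hij])

lemma flipAt_same {n : ℕ} (j : Fin n) (σ : Fin n → Bool) : (flipAt j σ) j = !σ j := by
  simp [flipAt, Function.Involutive.toPerm]

lemma flipAt_other {n : ℕ} (j : Fin n) (σ : Fin n → Bool) {i : Fin n} (hij : i ≠ j) :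
    (flipAt j σ) i = σ i := by
  simp [flipAt, Function.Involutive.toPerm, Function.update_of_ne hij]

def flipAll {n : ℕ} : (Fin n → Bool) ≃ (Fin n → Bool) :=
  Function.Involutive.toPerm (fun σ i => !(σ i)) (by intro σ; funext i; simp)

lemma flipAll_apply {n : ℕ} (σ : Fin n → Bool) (i : Fin n) : (flipAll σ) i = !(σ i) := rfl

lemma sum_eps_eps {n : ℕ} {i j : Fin n} (hij : i ≠ j) :
    ∑ σ : Fin n → Bool, eps (σ i) * eps (σ j) = 0 := by
  have h2 : ∀ σ : Fin n → Bool,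
      eps ((flipAt i σ) i) * eps ((flipAt i σ) j) = -(eps (σ i) * eps (σ j)) := by
    intro σ
    rw [flipAt_same, flipAt_other i σ (Ne.symm hij), eps_not]
    ring
  have h3 : (∑ σ : Fin n → Bool, eps (σ i) * eps (σ j))
      = -∑ σ : Fin n → Bool, eps (σ i) * eps (σ j) := by
    calc (∑ σ : Fin n → Bool, eps (σ i) * eps (σ j))
        = ∑ σ : Fin n → Bool, eps ((flipAt i σ) i) * eps ((flipAt i σ) j) :=
          (Equiv.sum_comp (flipAt i) _).symm
      _ = ∑ σ : Fin n → Bool, -(eps (σ i) * eps (σ j)) := Finset.sum_congr rfl fun σ _ => h2 σ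
      _ = -∑ σ : Fin n → Bool, eps (σ i) * eps (σ j) := Finset.sum_neg_distrib _
  linarith

lemma card_bool_fun (n : ℕ) : (Finset.univ : Finset (Fin n → Bool)).card = 2 ^ n := by
  simp [Finset.card_univ]

lemma sum_norm_eps_smul {n : ℕ} {E : Type*} [NormedAddCommGroup E] [InnerProductSpace ℝ E]
    (y : Fin n → E) :
    ∑ σ : Fin n → Bool, ‖∑ i, eps (σ i) • y i‖ ≤ 2 ^ n * Real.sqrt (∑ i, ‖y i‖ ^ 2) := by
  have hsq : ∑ σ : Fin n → Bool, ‖∑ i, eps (σ i) • y i‖ ^ 2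
      = 2 ^ n * ∑ i, ‖y i‖ ^ 2 := by
    have expand : ∀ σ : Fin n → Bool, ‖∑ i, eps (σ i) • y i‖ ^ 2
        = ∑ i, ∑ j, (eps (σ i) * eps (σ j)) * ⟪y i, y j⟫ := by
      intro σ
      rw [← real_inner_self_eq_norm_sq, sum_inner]
      apply Finset.sum_congr rfl
      intro i _
      rw [inner_sum]
      apply Finset.sum_congr rfl
      intro j _
      rw [real_inner_smul_left, real_inner_smul_right]
      ring
    calc ∑ σ : Fin n → Bool, ‖∑ i, eps (σ i) • y i‖ ^ 2
        = ∑ σ : Fin n → Bool, ∑ i, ∑ j, (eps (σ i) * eps (σ j)) * ⟪y i, y j⟫ :=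
          Finset.sum_congr rfl fun σ _ => expand σ
      _ = ∑ i, ∑ j, (∑ σ : Fin n → Bool, eps (σ i) * eps (σ j)) * ⟪y i, y j⟫ := by
          rw [Finset.sum_comm]
          apply Finset.sum_congr rfl
          intro i _
          rw [Finset.sum_comm]
          apply Finset.sum_congr rfl
          intro j _
          rw [Finset.sum_mul]
      _ = ∑ i, (2:ℝ) ^ n * ‖y i‖ ^ 2 := by
          apply Finset.sum_congr rfl
          intro i _
          rw [Finset.sum_eq_single i]
          · rw [show (∑ σ : Fin n → Bool, eps (σ i) * eps (σ i)) = 2 ^ n by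
              simp [eps_mul_self, card_bool_fun], real_inner_self_eq_norm_sq]
          · intro j _ hji
            rw [sum_eps_eps (Ne.symm hji), zero_mul]
          · intro hi; exact absurd (Finset.mem_univ i) hi
      _ = 2 ^ n * ∑ i, ‖y i‖ ^ 2 := (Finset.mul_sum _ _ _).symm
  calc ∑ σ : Fin n → Bool, ‖∑ i, eps (σ i) • y i‖
      = ∑ σ : Fin n → Bool, 1 * ‖∑ i, eps (σ i) • y i‖ := by simp
    _ ≤ Real.sqrt (∑ _σ : Fin n → Bool, (1:ℝ) ^ 2) *
        Real.sqrt (∑ σ : Fin n → Bool, ‖∑ i, eps (σ i) • y i‖ ^ 2) :=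
          Real.sum_mul_le_sqrt_mul_sqrt _ _ _
    _ = Real.sqrt ((2:ℝ) ^ n) * Real.sqrt (2 ^ n * ∑ i, ‖y i‖ ^ 2) := by
          rw [hsq]; norm_num [card_bool_fun]
    _ = 2 ^ n * Real.sqrt (∑ i, ‖y i‖ ^ 2) := by
          rw [Real.sqrt_mul (by positivity), ← mul_assoc,
            Real.mul_self_sqrt (by positivity)]
lemma abs_sum_eps_le {n : ℕ} {G : Type*} {F : Set G} (σ : Fin n → Bool) (t : Fin n → G → ℝ)
    {C : ℝ} (hC : ∀ i, ∀ g ∈ F, |t i g| ≤ C) :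
    ∀ g ∈ F, |∑ i, eps (σ i) * t i g| ≤ n * C := by
  intro g hg
  calc |∑ i, eps (σ i) * t i g| ≤ ∑ i, |eps (σ i) * t i g| := Finset.abs_sum_le_sum_abs _ _
    _ ≤ ∑ _i : Fin n, C := by
        apply Finset.sum_le_sum
        intro i _
        rw [abs_mul, eps_abs, one_mul]
        exact hC i g hg
    _ = n * C := by simp [Finset.sum_const, Finset.card_univ, nsmul_eq_mul]

lemma contraction {n : ℕ} {G : Type*} {F : Set G} (hne : F.Nonempty)
    (u : Fin n → G → ℝ) {B : ℝ} (hB : ∀ i, ∀ g ∈ F, |u i g| ≤ B)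
    {L : ℝ} (hL : 0 ≤ L) (φ : ℝ → ℝ) (hφ : ∀ s t, |φ s - φ t| ≤ L * |s - t|) :
    ∑ σ : Fin n → Bool, sSup ((fun g => ∑ i, eps (σ i) * φ (u i g)) '' F) ≤
      ∑ σ : Fin n → Bool, sSup ((fun g => ∑ i, eps (σ i) * (L * u i g)) '' F) := by
  set v : Finset (Fin n) → (Fin n → Bool) → G → ℝ :=
    fun s σ g => ∑ i, eps (σ i) * (if i ∈ s then φ (u i g) else L * u i g) with hv
  set M : ℝ := L * B + |φ 0| with hM
  have hterm : ∀ (s : Finset (Fin n)) (i : Fin n), ∀ g ∈ F,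
      |if i ∈ s then φ (u i g) else L * u i g| ≤ M := by
    intro s i g hg
    have hub := hB i g hg
    have hu0 : 0 ≤ |u i g| := abs_nonneg _
    have hLu : L * |u i g| ≤ L * B := mul_le_mul_of_nonneg_left hub hL
    by_cases his : i ∈ s
    · rw [if_pos his]
      have h1 : |φ (u i g) - φ 0| ≤ L * |u i g - 0| := hφ _ _
      rw [sub_zero] at h1
      calc |φ (u i g)| ≤ |φ (u i g) - φ 0| + |φ 0| := by
            have := abs_add_le (φ (u i g) - φ 0) (φ 0); simpa using this
        _ ≤ M := by rw [hM]; linarith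
    · rw [if_neg his, abs_mul, abs_of_nonneg hL]
      have : (0:ℝ) ≤ |φ 0| := abs_nonneg _
      rw [hM]; linarith
  have hvb : ∀ s σ, ∀ g ∈ F, |v s σ g| ≤ n * M :=
    fun s σ => abs_sum_eps_le σ _ (hterm s)
  have hbdd : ∀ s σ, BddAbove ((v s σ) '' F) :=
    fun s σ => bdd_of_forall (fun g hg => (abs_le.mp (hvb s σ g hg)).2)
  have step : ∀ (j : Fin n) (s : Finset (Fin n)), j ∉ s →
      (∑ σ : Fin n → Bool, sSup (v (insert j s) σ '' F)) ≤
        ∑ σ : Fin n → Bool, sSup (v s σ '' F) := by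
    intro j s hjs
    have pair : ∀ σ : Fin n → Bool,
        sSup (v (insert j s) σ '' F) + sSup (v (insert j s) (flipAt j σ) '' F) ≤
        sSup (v s σ '' F) + sSup (v s (flipAt j σ) '' F) := by
      intro σ
      set c : G → ℝ := fun g =>
        ∑ i ∈ Finset.univ.erase j, eps (σ i) * (if i ∈ s then φ (u i g) else L * u i g) with hc
      have esum : ∀ (τ : Fin n → Bool) (s' : Finset (Fin n)), (∀ i, i ≠ j → τ i = σ i) →
          (∀ i, i ≠ j → (i ∈ s' ↔ i ∈ s)) →
          v s' τ = fun g => eps (τ j) * (if j ∈ s' then φ (u j g) else L * u j g) + c g := by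
        intro τ s' hτ hs'
        funext g
        rw [hv]
        dsimp only
        rw [← Finset.add_sum_erase _ _ (Finset.mem_univ j)]
        congr 1
        apply Finset.sum_congr rfl
        intro i hi
        have hij : i ≠ j := Finset.ne_of_mem_erase hi
        rw [hτ i hij]
        congr 1
        by_cases his : i ∈ s
        · rw [if_pos his, if_pos ((hs' i hij).mpr his)]
        · rw [if_neg his, if_neg (fun hc' => his ((hs' i hij).mp hc'))]
      have e1 : v (insert j s) σ = fun g => eps (σ j) * φ (u j g) + c g := by
        rw [esum σ (insert j s) (fun _ _ => rfl)
          (fun i hij => by simp [Finset.mem_insert, hij])]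
        simp [Finset.mem_insert_self]
      have e2 : v (insert j s) (flipAt j σ) = fun g => -(eps (σ j) * φ (u j g)) + c g := by
        rw [esum (flipAt j σ) (insert j s) (fun i hij => flipAt_other j σ hij)
          (fun i hij => by simp [Finset.mem_insert, hij])]
        simp [Finset.mem_insert_self, flipAt_same, eps_not]
      have e3 : v s σ = fun g => eps (σ j) * (L * u j g) + c g := by
        rw [esum σ s (fun _ _ => rfl) (fun _ _ => Iff.rfl)]
        simp [if_neg hjs]
      have e4 : v s (flipAt j σ) = fun g => -(eps (σ j) * (L * u j g)) + c g := by
        rw [esum (flipAt j σ) s (fun i hij => flipAt_other j σ hij) (fun _ _ => Iff.rfl)]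
        simp [if_neg hjs, flipAt_same, eps_not]
      have hb1 : BddAbove ((fun g => eps (σ j) * (L * u j g) + c g) '' F) := e3 ▸ hbdd s σ
      have hb2 : BddAbove ((fun g => -(eps (σ j) * (L * u j g)) + c g) '' F) :=
        e4 ▸ hbdd s (flipAt j σ)
      have hab : ∀ g ∈ F, ∀ g' ∈ F,
          |eps (σ j) * φ (u j g) - eps (σ j) * φ (u j g')| ≤
          |eps (σ j) * (L * u j g) - eps (σ j) * (L * u j g')| := by
        intro g hg g' hg'
        rw [← mul_sub, ← mul_sub, abs_mul, abs_mul, eps_abs, one_mul, one_mul,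
          ← mul_sub, abs_mul, abs_of_nonneg hL]
        exact hφ _ _
      rw [e1, e2, e3, e4]
      exact twopoint hne _ _ _ hab hb1 hb2
    have l1 : ∑ σ : Fin n → Bool, sSup (v (insert j s) (flipAt j σ) '' F)
        = ∑ σ : Fin n → Bool, sSup (v (insert j s) σ '' F) :=
      Equiv.sum_comp (flipAt j) (fun τ => sSup (v (insert j s) τ '' F))
    have l2 : ∑ σ : Fin n → Bool, sSup (v s (flipAt j σ) '' F)
        = ∑ σ : Fin n → Bool, sSup (v s σ '' F) :=
      Equiv.sum_comp (flipAt j) (fun τ => sSup (v s τ '' F))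
    have hsum := Finset.sum_le_sum (fun σ (_ : σ ∈ Finset.univ) => pair σ)
    rw [Finset.sum_add_distrib, Finset.sum_add_distrib, l1, l2] at hsum
    linarith
  have main : ∀ s : Finset (Fin n),
      (∑ σ : Fin n → Bool, sSup (v s σ '' F)) ≤ ∑ σ : Fin n → Bool, sSup (v ∅ σ '' F) := by
    intro s
    induction s using Finset.induction_on with
    | empty => exact le_refl _
    | @insert j s hjs ih => exact le_trans (step j s hjs) ih
  calc ∑ σ : Fin n → Bool, sSup ((fun g => ∑ i, eps (σ i) * φ (u i g)) '' F)
      = ∑ σ : Fin n → Bool, sSup (v Finset.univ σ '' F) := by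
        apply Finset.sum_congr rfl; intro σ _; rw [hv]; simp
    _ ≤ ∑ σ : Fin n → Bool, sSup (v ∅ σ '' F) := main _
    _ = ∑ σ : Fin n → Bool, sSup ((fun g => ∑ i, eps (σ i) * (L * u i g)) '' F) := by
        apply Finset.sum_congr rfl; intro σ _; rw [hv]; simp
lemma habs {L : ℝ} (hL : 0 ≤ L) {h : ℝ → ℝ} (hLip : LipschitzWith L.toNNReal h) :
    ∀ s t, |h s - h t| ≤ L * |s - t| := by
  intro s t
  have := hLip.dist_le_mul s t
  rwa [Real.dist_eq, Real.dist_eq, Real.coe_toNNReal _ hL] at this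

lemma coord_le_norm {m : ℕ} (w : EuclideanSpace ℝ (Fin m)) (j : Fin m) : |w j| ≤ ‖w‖ := by
  rw [EuclideanSpace.norm_eq]
  calc |w j| = Real.sqrt (‖w j‖ ^ 2) := by
        rw [Real.sqrt_sq_eq_abs, Real.norm_eq_abs, abs_abs]
    _ ≤ Real.sqrt (∑ i, ‖w i‖ ^ 2) :=
        Real.sqrt_le_sqrt (Finset.single_le_sum (f := fun i => ‖w i‖ ^ 2) (fun i _ => sq_nonneg _) (Finset.mem_univ j))

lemma norm_eq_sqrt_sum {m : ℕ} (w : EuclideanSpace ℝ (Fin m)) :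
    ‖w‖ = Real.sqrt (∑ j, (w j) ^ 2) := by
  rw [EuclideanSpace.norm_eq]
  congr 1
  apply Finset.sum_congr rfl
  intro j _
  rw [Real.norm_eq_abs, sq_abs]

lemma zero_mem_Fclass (d : ℕ) (msz : ℕ → ℕ) (C3 : ℕ → ℝ) (h : ℝ → ℝ)
    (hC3 : ∀ p, 0 ≤ C3 p) : ∀ p, (fun _ => (0:ℝ)) ∈ Fclass d msz C3 h p
  | 0 => ⟨0, by simpa using hC3 0, by funext x; simp⟩
  | p + 1 => ⟨fun _ => fun _ => (0:ℝ), 0,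
      fun _ => zero_mem_Fclass d msz C3 h hC3 p,
      by simpa using hC3 (p+1),
      by funext x; simp⟩

lemma Fclass_bound {d : ℕ} (msz : ℕ → ℕ) {C1 : ℝ} (hC1 : 0 ≤ C1) {C3 : ℕ → ℝ}
    (hC3 : ∀ p, 0 ≤ C3 p) {L : ℝ} (hL : 0 ≤ L) {h : ℝ → ℝ}
    (hLip : LipschitzWith L.toNNReal h) :
    ∀ p, ∃ B : ℝ, 0 ≤ B ∧ ∀ f ∈ Fclass d msz C3 h p,
      ∀ y : EuclideanSpace ℝ (Fin d), ‖y‖ ≤ C1 → |f y| ≤ B := by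
  intro p
  induction p with
  | zero =>
    refine ⟨C3 0 * C1, mul_nonneg (hC3 0) hC1, ?_⟩
    rintro f ⟨w, hw, rfl⟩ y hy
    calc |⟪w, y⟫| ≤ ‖w‖ * ‖y‖ := abs_real_inner_le_norm w y
      _ ≤ C3 0 * C1 := mul_le_mul hw hy (norm_nonneg y) (hC3 0)
  | succ p ih =>
    obtain ⟨B, hB0, hB⟩ := ih
    refine ⟨(msz p : ℝ) * (C3 (p+1) * (L * B + |h 0|)), mul_nonneg (Nat.cast_nonneg _) (mul_nonneg (hC3 _) (add_nonneg (mul_nonneg hL hB0) (abs_nonneg _))), ?_⟩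
    rintro f ⟨g, w, hg, hw, rfl⟩ y hy
    have hterm : ∀ j : Fin (msz p), |w j * h (g j y)| ≤ C3 (p+1) * (L * B + |h 0|) := by
      intro j
      rw [abs_mul]
      have h1 : |w j| ≤ C3 (p+1) := le_trans (coord_le_norm w j) hw
      have h2 : |h (g j y)| ≤ L * B + |h 0| := by
        have h3 : |h (g j y) - h 0| ≤ L * |g j y - 0| := habs hL hLip _ _
        rw [sub_zero] at h3
        have h4 : |g j y| ≤ B := hB (g j) (hg j) y hy
        have h5 : L * |g j y| ≤ L * B := mul_le_mul_of_nonneg_left h4 hL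
        have h6 := abs_add_le (h (g j y) - h 0) (h 0)
        simp only [sub_add_cancel] at h6
        linarith
      exact mul_le_mul h1 h2 (abs_nonneg _) (hC3 (p+1))
    calc |∑ j, w j * h (g j y)| ≤ ∑ j, |w j * h (g j y)| := Finset.abs_sum_le_sum_abs _ _
      _ ≤ ∑ _j : Fin (msz p), C3 (p+1) * (L * B + |h 0|) :=
          Finset.sum_le_sum (fun j _ => hterm j)
      _ = (msz p : ℝ) * (C3 (p+1) * (L * B + |h 0|)) := by
          simp [Finset.sum_const, Finset.card_univ, nsmul_eq_mul]

noncomputable def gbound (C1 : ℝ) (C3 : ℕ → ℝ) (L : ℝ) (h : ℝ → ℝ) (msz : ℕ → ℕ)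
    (p : ℕ) : ℝ :=
  (2*L)^p * C1 * C3 0 * (∏ q ∈ Finset.range p, Real.sqrt (msz q) * C3 (q+1))
    + |h 0| * ∑ q ∈ Finset.range p,
        (2*L)^(p-1-q) * ∏ r ∈ Finset.Icc q (p-1), Real.sqrt (msz r) * C3 (r+1)

lemma gbound_succ (C1 : ℝ) (C3 : ℕ → ℝ) (L : ℝ) (h : ℝ → ℝ) (msz : ℕ → ℕ) (p : ℕ) :
    gbound C1 C3 L h msz (p+1)
      = (Real.sqrt (msz p) * C3 (p+1)) * (2 * L * gbound C1 C3 L h msz p + |h 0|) := by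
  unfold gbound
  rw [Finset.prod_range_succ, Finset.sum_range_succ]
  simp only [Nat.add_sub_cancel]
  rw [Nat.sub_self, pow_zero, Finset.Icc_self, Finset.prod_singleton]
  have hsum : ∑ q ∈ Finset.range p,
      (2*L)^(p-q) * ∏ r ∈ Finset.Icc q p, (Real.sqrt (msz r) * C3 (r+1))
      = (2*L) * (Real.sqrt (msz p) * C3 (p+1)) * ∑ q ∈ Finset.range p,
          (2*L)^(p-1-q) * ∏ r ∈ Finset.Icc q (p-1), (Real.sqrt (msz r) * C3 (r+1)) := by
    rw [Finset.mul_sum]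
    apply Finset.sum_congr rfl
    intro q hq
    have hqp : q < p := Finset.mem_range.mp hq
    have e1 : p - q = (p-1-q) + 1 := by omega
    have e2 : Finset.Icc q p = insert p (Finset.Icc q (p-1)) := by
      ext r; simp only [Finset.mem_Icc, Finset.mem_insert]; omega
    rw [e1, pow_succ, e2, Finset.prod_insert (by simp only [Finset.mem_Icc]; omega)]
    ring
  rw [hsum, pow_succ]
  ring
lemma main_ind {d n : ℕ} (msz : ℕ → ℕ) {C1 : ℝ} (hC1 : 0 < C1)
    {C3 : ℕ → ℝ} (hC3 : ∀ p, 0 < C3 p) {L : ℝ} (hL : 0 < L) {h : ℝ → ℝ}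
    (hLip : LipschitzWith L.toNNReal h) (x : Fin n → EuclideanSpace ℝ (Fin d))
    (hx : ∀ i, ‖x i‖ ≤ C1) (p : ℕ) :
    ∑ σ : Fin n → Bool, sSup ((fun f => ∑ i, eps (σ i) * f (x i)) '' Fclass d msz C3 h p)
      ≤ 2^n * Real.sqrt n * gbound C1 C3 L h msz p := by
  have hC3' : ∀ q, 0 ≤ C3 q := fun q => (hC3 q).le
  induction p with
  | zero =>
    have hz := zero_mem_Fclass d msz C3 h hC3' 0
    have per : ∀ σ : Fin n → Bool,
        sSup ((fun f => ∑ i, eps (σ i) * f (x i)) '' Fclass d msz C3 h 0)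
          ≤ C3 0 * ‖∑ i, eps (σ i) • x i‖ := by
      intro σ
      apply csSup_le (Set.Nonempty.image _ ⟨_, hz⟩)
      rintro r ⟨f, hf, rfl⟩
      obtain ⟨w, hw, rfl⟩ := hf
      have key : (∑ i, eps (σ i) * ⟪w, x i⟫) = ⟪w, ∑ i, eps (σ i) • x i⟫ := by
        rw [inner_sum]
        exact Finset.sum_congr rfl (fun i _ => (real_inner_smul_right w (x i) (eps (σ i))).symm)
      dsimp only
      rw [key]
      calc ⟪w, ∑ i, eps (σ i) • x i⟫ ≤ ‖w‖ * ‖∑ i, eps (σ i) • x i‖ := real_inner_le_norm _ _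
        _ ≤ C3 0 * ‖∑ i, eps (σ i) • x i‖ :=
            mul_le_mul_of_nonneg_right hw (norm_nonneg _)
    calc ∑ σ : Fin n → Bool, sSup ((fun f => ∑ i, eps (σ i) * f (x i)) '' Fclass d msz C3 h 0)
        ≤ ∑ σ : Fin n → Bool, C3 0 * ‖∑ i, eps (σ i) • x i‖ :=
          Finset.sum_le_sum (fun σ _ => per σ)
      _ = C3 0 * ∑ σ : Fin n → Bool, ‖∑ i, eps (σ i) • x i‖ := (Finset.mul_sum _ _ _).symm
      _ ≤ C3 0 * (2^n * Real.sqrt (∑ i, ‖x i‖^2)) :=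
          mul_le_mul_of_nonneg_left (sum_norm_eps_smul x) (hC3 0).le
      _ ≤ C3 0 * (2^n * (Real.sqrt n * C1)) := by
          apply mul_le_mul_of_nonneg_left _ (hC3 0).le
          apply mul_le_mul_of_nonneg_left _ (by positivity)
          calc Real.sqrt (∑ i, ‖x i‖^2) ≤ Real.sqrt ((n:ℝ) * C1^2) := by
                apply Real.sqrt_le_sqrt
                calc ∑ i, ‖x i‖^2 ≤ ∑ _i : Fin n, C1^2 :=
                      Finset.sum_le_sum (fun i _ => pow_le_pow_left₀ (norm_nonneg _) (hx i) 2)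
                  _ = (n:ℝ) * C1^2 := by
                      simp [Finset.sum_const, Finset.card_univ, nsmul_eq_mul]
            _ = Real.sqrt n * C1 := by
                rw [Real.sqrt_mul (Nat.cast_nonneg n), Real.sqrt_sq hC1.le]
      _ = 2^n * Real.sqrt n * gbound C1 C3 L h msz 0 := by
          rw [show gbound C1 C3 L h msz 0 = C1 * C3 0 from by simp [gbound]]
          ring
  | succ p ih =>
    obtain ⟨B, hB0, hB⟩ := Fclass_bound msz hC1.le hC3' hL.le hLip p
    have hzero : (fun _ => (0:ℝ)) ∈ Fclass d msz C3 h p := zero_mem_Fclass d msz C3 h hC3' p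
    have hne : (Fclass d msz C3 h p).Nonempty := ⟨_, hzero⟩
    have hfb : ∀ i : Fin n, ∀ g ∈ Fclass d msz C3 h p, |g (x i)| ≤ B :=
      fun i g hg => hB g hg (x i) (hx i)
    have hφb : ∀ i : Fin n, ∀ g ∈ Fclass d msz C3 h p, |h (g (x i)) - h 0| ≤ L * B := by
      intro i g hg
      have h1 : |h (g (x i)) - h 0| ≤ L * |g (x i) - 0| := habs hL.le hLip _ _
      rw [sub_zero] at h1
      exact le_trans h1 (mul_le_mul_of_nonneg_left (hfb i g hg) hL.le)
    have hhb : ∀ i : Fin n, ∀ g ∈ Fclass d msz C3 h p, |h (g (x i))| ≤ L * B + |h 0| := by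
      intro i g hg
      have h6 := abs_add_le (h (g (x i)) - h 0) (h 0)
      simp only [sub_add_cancel] at h6
      linarith [hφb i g hg]
    set D : (Fin n → Bool) → ℝ := fun σ =>
      sSup ((fun g => |∑ i, eps (σ i) * h (g (x i))|) '' Fclass d msz C3 h p) with hD
    set U : (Fin n → Bool) → ℝ := fun σ =>
      sSup ((fun g => ∑ i, eps (σ i) * (h (g (x i)) - h 0)) '' Fclass d msz C3 h p) with hU
    set S : (Fin n → Bool) → ℝ := fun σ =>
      sSup ((fun f => ∑ i, eps (σ i) * f (x i)) '' Fclass d msz C3 h p) with hS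
    have hbddD : ∀ σ : Fin n → Bool, BddAbove ((fun g => |∑ i, eps (σ i) * h (g (x i))|) '' Fclass d msz C3 h p) :=
      fun σ => bdd_of_forall (fun g hg =>
        abs_sum_eps_le σ (fun i g => h (g (x i))) hhb g hg)
    have hbddU : ∀ σ : Fin n → Bool, BddAbove
        ((fun g => ∑ i, eps (σ i) * (h (g (x i)) - h 0)) '' Fclass d msz C3 h p) :=
      fun σ => bdd_of_forall (fun g hg =>
        (abs_le.mp (abs_sum_eps_le σ (fun i g => h (g (x i)) - h 0) hφb g hg)).2)
    have hSb : ∀ σ : Fin n → Bool, ∀ g ∈ Fclass d msz C3 h p,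
        |∑ i, eps (σ i) * g (x i)| ≤ n * B :=
      fun σ => abs_sum_eps_le (F := Fclass d msz C3 h p) σ (fun i g => g (x i)) hfb
    have cU0 : ∀ σ : Fin n → Bool, 0 ≤ U σ := by
      intro σ
      apply le_csSup (hbddU σ)
      exact ⟨_, hzero, by simp⟩
    have hDnn : ∀ σ : Fin n → Bool, 0 ≤ D σ := by
      intro σ
      refine le_trans (abs_nonneg (∑ i, eps (σ i) * h ((0:ℝ)))) ?_
      exact le_csSup (hbddD σ) ⟨_, hzero, rfl⟩
    set A : ℝ := Real.sqrt (msz p) * C3 (p+1) with hA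
    have hA0 : 0 ≤ A := mul_nonneg (Real.sqrt_nonneg _) (hC3 (p+1)).le
    have c1 : ∀ σ : Fin n → Bool,
        sSup ((fun f => ∑ i, eps (σ i) * f (x i)) '' Fclass d msz C3 h (p+1)) ≤ A * D σ := by
      intro σ
      apply csSup_le (Set.Nonempty.image _ ⟨_, zero_mem_Fclass d msz C3 h hC3' (p+1)⟩)
      rintro r ⟨f, hf, rfl⟩
      obtain ⟨g, w, hg, hw, rfl⟩ := hf
      have hvle : ∀ j, |∑ i, eps (σ i) * h (g j (x i))| ≤ D σ :=
        fun j => le_csSup (hbddD σ) ⟨g j, hg j, rfl⟩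
      dsimp only
      calc ∑ i, eps (σ i) * ∑ j, w j * h (g j (x i))
          = ∑ j, w j * ∑ i, eps (σ i) * h (g j (x i)) := by
            simp_rw [Finset.mul_sum]
            rw [Finset.sum_comm]
            exact Finset.sum_congr rfl (fun j _ => Finset.sum_congr rfl (fun i _ => by ring))
        _ ≤ Real.sqrt (∑ j, (w j)^2) *
            Real.sqrt (∑ j, (∑ i, eps (σ i) * h (g j (x i)))^2) :=
            Real.sum_mul_le_sqrt_mul_sqrt _ _ _
        _ ≤ C3 (p+1) * (Real.sqrt (msz p) * D σ) := by
            apply mul_le_mul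
            · rw [← norm_eq_sqrt_sum]; exact hw
            · calc Real.sqrt (∑ j, (∑ i, eps (σ i) * h (g j (x i)))^2)
                  ≤ Real.sqrt (∑ _j : Fin (msz p), (D σ)^2) := by
                    apply Real.sqrt_le_sqrt
                    apply Finset.sum_le_sum
                    intro j _
                    rw [← sq_abs]
                    exact pow_le_pow_left₀ (abs_nonneg _) (hvle j) 2
                _ = Real.sqrt ((msz p : ℝ) * (D σ)^2) := by
                    simp [Finset.sum_const, Finset.card_univ, nsmul_eq_mul]
                _ = Real.sqrt (msz p) * D σ := by
                    rw [Real.sqrt_mul (Nat.cast_nonneg _), Real.sqrt_sq (hDnn σ)]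
            · exact Real.sqrt_nonneg _
            · exact (hC3 (p+1)).le
        _ = A * D σ := by rw [hA]; ring
    have c2 : ∀ σ : Fin n → Bool,
        D σ ≤ U σ + U (flipAll σ) + |h 0| * |∑ i, eps (σ i)| := by
      intro σ
      apply csSup_le (hne.image _)
      rintro r ⟨g, hg, rfl⟩
      have hsplit : ∑ i, eps (σ i) * h (g (x i))
          = (∑ i, eps (σ i) * (h (g (x i)) - h 0)) + h 0 * ∑ i, eps (σ i) := by
        rw [Finset.mul_sum, ← Finset.sum_add_distrib]
        exact Finset.sum_congr rfl (fun i _ => by ring)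
      have h1 : (∑ i, eps (σ i) * (h (g (x i)) - h 0)) ≤ U σ :=
        le_csSup (hbddU σ) ⟨g, hg, rfl⟩
      have h2 : -(∑ i, eps (σ i) * (h (g (x i)) - h 0)) ≤ U (flipAll σ) := by
        have heq : -(∑ i, eps (σ i) * (h (g (x i)) - h 0))
            = ∑ i, eps ((flipAll σ) i) * (h (g (x i)) - h 0) := by
          simp only [flipAll_apply, eps_not]
          rw [← Finset.sum_neg_distrib]
          exact Finset.sum_congr rfl (fun i _ => by ring)
        rw [heq]
        exact le_csSup (hbddU _) ⟨g, hg, rfl⟩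
      have h3 : |∑ i, eps (σ i) * (h (g (x i)) - h 0)| ≤ U σ + U (flipAll σ) := by
        have := cU0 σ; have := cU0 (flipAll σ)
        rcases abs_cases (∑ i, eps (σ i) * (h (g (x i)) - h 0)) with ⟨he, _⟩ | ⟨he, _⟩ <;>
          rw [he] <;> linarith
      dsimp only
      calc |∑ i, eps (σ i) * h (g (x i))|
          = |(∑ i, eps (σ i) * (h (g (x i)) - h 0)) + h 0 * ∑ i, eps (σ i)| := by rw [hsplit]
        _ ≤ |∑ i, eps (σ i) * (h (g (x i)) - h 0)| + |h 0| * |∑ i, eps (σ i)| := by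
            refine le_trans (abs_add_le _ _) ?_
            rw [abs_mul]
        _ ≤ U σ + U (flipAll σ) + |h 0| * |∑ i, eps (σ i)| := by
            have h4 : (0:ℝ) ≤ |h 0| := abs_nonneg _
            have h5 : (0:ℝ) ≤ |∑ i, eps (σ i)| := abs_nonneg _
            linarith
    have c3 : ∑ σ : Fin n → Bool, U σ ≤ L * ∑ σ : Fin n → Bool, S σ := by
      have hcontr := contraction hne (fun i g => g (x i)) hfb hL.le (fun t => h t - h 0)
        (fun s t => by
          rw [show (h s - h 0) - (h t - h 0) = h s - h t by ring]
          exact habs hL.le hLip s t)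
      have hR : ∀ σ : Fin n → Bool,
          sSup ((fun g => ∑ i, eps (σ i) * (L * g (x i))) '' Fclass d msz C3 h p)
            = L * S σ := by
        intro σ
        have heq : (fun g : EuclideanSpace ℝ (Fin d) → ℝ => ∑ i, eps (σ i) * (L * g (x i)))
            = fun g => L * ∑ i, eps (σ i) * g (x i) := by
          funext g
          rw [Finset.mul_sum]
          exact Finset.sum_congr rfl (fun i _ => by ring)
        rw [heq]
        exact sSup_image_mul hne _ (hSb σ) hL.le
      calc ∑ σ : Fin n → Bool, U σ
          ≤ ∑ σ : Fin n → Bool,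
            sSup ((fun g => ∑ i, eps (σ i) * (L * g (x i))) '' Fclass d msz C3 h p) := hcontr
        _ = ∑ σ : Fin n → Bool, L * S σ := Finset.sum_congr rfl (fun σ _ => hR σ)
        _ = L * ∑ σ : Fin n → Bool, S σ := (Finset.mul_sum _ _ _).symm
    have c4 : ∑ σ : Fin n → Bool, |∑ i, eps (σ i)| ≤ 2^n * Real.sqrt n := by
      have h1 := sum_norm_eps_smul (fun _ : Fin n => (1:ℝ))
      simp only [smul_eq_mul, mul_one, Real.norm_eq_abs, norm_one, one_pow] at h1
      rwa [Finset.sum_const, Finset.card_univ, Fintype.card_fin, nsmul_eq_mul, mul_one] at h1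
    have c5 : ∑ σ : Fin n → Bool, U (flipAll σ) = ∑ σ : Fin n → Bool, U σ :=
      Equiv.sum_comp flipAll U
    calc ∑ σ : Fin n → Bool,
        sSup ((fun f => ∑ i, eps (σ i) * f (x i)) '' Fclass d msz C3 h (p+1))
        ≤ ∑ σ : Fin n → Bool, A * D σ := Finset.sum_le_sum (fun σ _ => c1 σ)
      _ = A * ∑ σ : Fin n → Bool, D σ := (Finset.mul_sum _ _ _).symm
      _ ≤ A * (2^n * Real.sqrt n * (2 * L * gbound C1 C3 L h msz p + |h 0|)) := by
          apply mul_le_mul_of_nonneg_left _ hA0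
          calc ∑ σ : Fin n → Bool, D σ
              ≤ ∑ σ : Fin n → Bool, (U σ + U (flipAll σ) + |h 0| * |∑ i, eps (σ i)|) :=
                Finset.sum_le_sum (fun σ _ => c2 σ)
            _ = 2 * (∑ σ : Fin n → Bool, U σ)
                + |h 0| * ∑ σ : Fin n → Bool, |∑ i, eps (σ i)| := by
                rw [Finset.sum_add_distrib, Finset.sum_add_distrib, c5, ← Finset.mul_sum]
                ring
            _ ≤ 2 * (L * ∑ σ : Fin n → Bool, S σ) + |h 0| * (2^n * Real.sqrt n) :=
                add_le_add (by linarith [c3]) (mul_le_mul_of_nonneg_left c4 (abs_nonneg _))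
            _ ≤ 2 * (L * (2^n * Real.sqrt n * gbound C1 C3 L h msz p))
                + |h 0| * (2^n * Real.sqrt n) := by
                have h2L := hL.le
                nlinarith [ih]
            _ = 2^n * Real.sqrt n * (2 * L * gbound C1 C3 L h msz p + |h 0|) := by ring
      _ = 2^n * Real.sqrt n * gbound C1 C3 L h msz (p+1) := by
          rw [gbound_succ]
          ring
/-- paper's Lemma 5. Rademacher complexity bound for the `P`-hidden-layer
class:
`R̂_n(F^P) ≤ (2L)^P C1 C3^0 Π_{p=1}^P √(m^{p−1}) C3^p / √n
  + (|h(0)|/√n) Σ_{q=1}^P (2L)^{P−q} Π_{p=q}^P √(m^{p−1}) C3^p`. -/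
theorem stmt_9 {d n : ℕ} (hn : 0 < n) (P : ℕ) (hP : 1 ≤ P) (msz : ℕ → ℕ)
    (C1 : ℝ) (hC1 : 0 < C1) (C3 : ℕ → ℝ) (hC3 : ∀ p, 0 < C3 p)
    (L : ℝ) (hL : 0 < L) (h : ℝ → ℝ) (hLip : LipschitzWith L.toNNReal h)
    (x : Fin n → EuclideanSpace ℝ (Fin d)) (hx : ∀ i, ‖x i‖ ≤ C1) :
    radEmp (Fclass d msz C3 h P) x ≤
      (2 * L) ^ P * C1 * C3 0 * (∏ p ∈ Finset.range P, Real.sqrt (msz p) * C3 (p + 1))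
          / Real.sqrt n
        + (|h 0| / Real.sqrt n) * ∑ q ∈ Finset.range P,
            (2 * L) ^ (P - 1 - q) *
              ∏ p ∈ Finset.Icc q (P - 1), Real.sqrt (msz p) * C3 (p + 1) := by
  have hC3' : ∀ p, 0 ≤ C3 p := fun p => (hC3 p).le
  obtain ⟨B, hB0, hB⟩ := Fclass_bound msz hC1.le hC3' hL.le hLip P
  have hzero := zero_mem_Fclass d msz C3 h hC3' P
  have hne : (Fclass d msz C3 h P).Nonempty := ⟨_, hzero⟩
  have hfb : ∀ σ : Fin n → Bool, ∀ f ∈ Fclass d msz C3 h P,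
      |∑ i, eps (σ i) * f (x i)| ≤ n * B :=
    fun σ => abs_sum_eps_le (F := Fclass d msz C3 h P) σ (fun i f => f (x i))
      (fun i f hf => hB f hf (x i) (hx i))
  have hrad : radEmp (Fclass d msz C3 h P) x
      = (2^n : ℝ)⁻¹ * ((n:ℝ)⁻¹ * ∑ σ : Fin n → Bool,
          sSup ((fun f => ∑ i, eps (σ i) * f (x i)) '' Fclass d msz C3 h P)) := by
    unfold radEmp
    congr 1
    rw [Finset.mul_sum]
    apply Finset.sum_congr rfl
    intro σ _
    rw [show {r : ℝ | ∃ f ∈ Fclass d msz C3 h P,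
          r = (n : ℝ)⁻¹ * ∑ i, (if σ i then (1:ℝ) else -1) * f (x i)}
        = (fun f => (n:ℝ)⁻¹ * ∑ i, eps (σ i) * f (x i)) '' Fclass d msz C3 h P from
        setOf_eq_image _ _]
    exact sSup_image_mul hne _ (hfb σ) (by positivity)
  have hmain := main_ind msz hC1 hC3 hL hLip x hx P
  have hnpos : (0:ℝ) < (n:ℝ) := by exact_mod_cast hn
  have hs : (0:ℝ) < Real.sqrt n := Real.sqrt_pos.mpr hnpos
  have hnn : Real.sqrt n * Real.sqrt n = (n:ℝ) := Real.mul_self_sqrt (Nat.cast_nonneg n)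
  have hfin : radEmp (Fclass d msz C3 h P) x ≤ gbound C1 C3 L h msz P / Real.sqrt n := by
    rw [hrad]
    have step1 : (2^n : ℝ)⁻¹ * ((n:ℝ)⁻¹ * ∑ σ : Fin n → Bool,
          sSup ((fun f => ∑ i, eps (σ i) * f (x i)) '' Fclass d msz C3 h P))
        ≤ (2^n:ℝ)⁻¹ * ((n:ℝ)⁻¹ * (2^n * Real.sqrt n * gbound C1 C3 L h msz P)) :=
      mul_le_mul_of_nonneg_left (mul_le_mul_of_nonneg_left hmain (by positivity))
        (by positivity)
    refine le_trans step1 (le_of_eq ?_)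
    have h3 : (2:ℝ)^n ≠ 0 := by positivity
    field_simp
    ring_nf
    simp only [Real.sq_sqrt hnpos.le]
    ring_nf
  have hrhs : gbound C1 C3 L h msz P / Real.sqrt n
      = (2 * L) ^ P * C1 * C3 0 * (∏ p ∈ Finset.range P, Real.sqrt (msz p) * C3 (p + 1))
          / Real.sqrt n
        + (|h 0| / Real.sqrt n) * ∑ q ∈ Finset.range P,
            (2 * L) ^ (P - 1 - q) *
              ∏ p ∈ Finset.Icc q (P - 1), Real.sqrt (msz p) * C3 (p + 1) := by
    unfold gbound
    ring
  calc radEmp (Fclass d msz C3 h P) x ≤ gbound C1 C3 L h msz P / Real.sqrt n := hfin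
    _ = _ := hrhs
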